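/- Let 1 < p ≤ 2, let N ≥ 1, and let M be a symmetric linear map on ℝ^N with |M ξ| ≤ Λ |ξ| for all ξ ∈ ℝ^N, where Λ ≥ 0. Then for all a, b ∈ ℝ^N, ||b|^{p−2} M b − |a|^{p−2} M a| ≤ Λ · ((3 − p)/(p − 1)) · 2^{p−1} · |b − a|^{p−1}. -/

import Mathlib

private lemma ratio_key (p : ℝ) (hp1 : 1 < p) (hp2 : p ≤ 2) {r : ℝ} (hr : 1 ≤ r) :
    1 - r ^ (p - 2) ≤ (r - 1) ^ (p - 1) := by
  have hd0 : 0 ≤ r - 1 := by linarith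
  have hr0 : 0 < r := by linarith
  by_cases hd1 : 1 ≤ r - 1
  · have h1 : (1 : ℝ) ≤ (r - 1) ^ (p - 1) := Real.one_le_rpow hd1 (by linarith)
    have h2 : (0 : ℝ) ≤ r ^ (p - 2) := Real.rpow_nonneg hr0.le _
    linarith
  · push_neg at hd1
    -- Bernoulli (negative exponent side): 1 - r^(p-2) ≤ (2-p)*(r-1)
    have hq1 : (0 : ℝ) ≤ 2 - p := by linarith
    have hq2 : (2 : ℝ) - p ≤ 1 := by linarith
    have hb : r ^ (2 - p) ≤ 1 + (2 - p) * (r - 1) := by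
      have := rpow_one_add_le_one_add_mul_self (s := r - 1) (by linarith) hq1 hq2
      have hre : 1 + (r - 1) = r := by ring
      rwa [hre] at this
    have hrp : r ^ (p - 2) = (r ^ (2 - p))⁻¹ := by
      rw [show p - 2 = -(2 - p) by ring, Real.rpow_neg hr0.le]
    have hrq_pos : 0 < r ^ (2 - p) := Real.rpow_pos_of_pos hr0 _
    have step1 : 1 - r ^ (p - 2) ≤ (2 - p) * (r - 1) := by
      rcases le_or_gt (1 - (2 - p) * (r - 1)) 0 with h | h
      · have : (0 : ℝ) ≤ r ^ (p - 2) := Real.rpow_nonneg hr0.le _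
        linarith
      · have h2 : (1 - (2 - p) * (r - 1)) * r ^ (2 - p) ≤ 1 := by
          nlinarith [hb, hrq_pos, mul_nonneg (mul_nonneg hq1 hd0) (mul_nonneg hq1 hd0)]
        have h3 : 1 - (2 - p) * (r - 1) ≤ (r ^ (2 - p))⁻¹ := by
          rw [← one_div, le_div_iff₀ hrq_pos]
          exact h2
        rw [hrp]; linarith
    have step2 : (2 - p) * (r - 1) ≤ r - 1 := by nlinarith
    have step3 : r - 1 ≤ (r - 1) ^ (p - 1) := by
      rcases eq_or_lt_of_le hd0 with h | h
      · rw [← h]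
        exact Real.rpow_nonneg le_rfl _
      · have := Real.rpow_le_rpow_of_exponent_ge h hd1.le (by linarith : p - 1 ≤ 1)
        rwa [Real.rpow_one] at this
    linarith

private lemma scalar_key (p : ℝ) (hp1 : 1 < p) (hp2 : p ≤ 2) {s t : ℝ}
    (hs : 0 < s) (hst : s ≤ t) :
    (s ^ (p - 2) - t ^ (p - 2)) * s ≤ (t - s) ^ (p - 1) := by
  have ht : 0 < t := lt_of_lt_of_le hs hst
  set r := t / s with hrdef
  have hr : 1 ≤ r := (one_le_div hs).2 hst
  have hr0 : 0 ≤ r := by linarith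
  have htr : t = s * r := by rw [hrdef]; field_simp
  have h1 : t ^ (p - 2) = s ^ (p - 2) * r ^ (p - 2) := by
    rw [htr, Real.mul_rpow hs.le hr0]
  have h2 : t - s = s * (r - 1) := by rw [htr]; ring
  have h3 : (t - s) ^ (p - 1) = s ^ (p - 1) * (r - 1) ^ (p - 1) := by
    rw [h2, Real.mul_rpow hs.le (by linarith)]
  have h4 : s ^ (p - 2) * s = s ^ (p - 1) := by
    rw [show p - 1 = (p - 2) + 1 by ring, Real.rpow_add_one hs.ne']
  have h5 : (s ^ (p - 2) - t ^ (p - 2)) * s = s ^ (p - 1) * (1 - r ^ (p - 2)) := by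
    rw [h1, ← h4]; ring
  rw [h5, h3]
  exact mul_le_mul_of_nonneg_left (ratio_key p hp1 hp2 hr) (Real.rpow_nonneg hs.le _)

private lemma norm_smul_rpow (p : ℝ) (hp1 : 1 < p) {E : Type*} [NormedAddCommGroup E]
    [NormedSpace ℝ E] (x : E) : ‖(‖x‖ ^ (p - 2) : ℝ) • x‖ = ‖x‖ ^ (p - 1) := by
  rcases eq_or_ne x 0 with rfl | hx
  · simp [Real.zero_rpow (by linarith : p - 1 ≠ 0)]
  · have hx0 : 0 < ‖x‖ := norm_pos_iff.2 hx
    rw [norm_smul, Real.norm_eq_abs, abs_of_nonneg (Real.rpow_nonneg hx0.le _),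
      show p - 1 = (p - 2) + 1 by ring, Real.rpow_add_one hx0.ne']

private lemma vec_key (p : ℝ) (hp1 : 1 < p) (hp2 : p ≤ 2) {E : Type*} [NormedAddCommGroup E]
    [NormedSpace ℝ E] (a b : E) (hab : ‖a‖ ≤ ‖b‖) :
    ‖(‖b‖ ^ (p - 2) : ℝ) • b - (‖a‖ ^ (p - 2) : ℝ) • a‖ ≤ 2 * ‖b - a‖ ^ (p - 1) := by
  rcases eq_or_ne a b with rfl | hne
  · simp [Real.zero_rpow (by linarith : p - 1 ≠ 0)]
  have hba : 0 < ‖b - a‖ := by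
    rw [norm_pos_iff, sub_ne_zero]; exact fun h => hne h.symm
  rcases lt_or_ge ‖b‖ ‖b - a‖ with hcase | hcase
  · calc ‖(‖b‖ ^ (p - 2) : ℝ) • b - (‖a‖ ^ (p - 2) : ℝ) • a‖
        ≤ ‖(‖b‖ ^ (p - 2) : ℝ) • b‖ + ‖(‖a‖ ^ (p - 2) : ℝ) • a‖ := norm_sub_le _ _
      _ = ‖b‖ ^ (p - 1) + ‖a‖ ^ (p - 1) := by
          rw [norm_smul_rpow p hp1, norm_smul_rpow p hp1]
      _ ≤ ‖b - a‖ ^ (p - 1) + ‖b - a‖ ^ (p - 1) :=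
          add_le_add (Real.rpow_le_rpow (norm_nonneg _) hcase.le (by linarith))
            (Real.rpow_le_rpow (norm_nonneg _) (hab.trans hcase.le) (by linarith))
      _ = 2 * ‖b - a‖ ^ (p - 1) := by ring
  · -- ‖b - a‖ ≤ ‖b‖, so b ≠ 0
    have hb0 : 0 < ‖b‖ := lt_of_lt_of_le hba hcase
    have hdecomp : (‖b‖ ^ (p - 2) : ℝ) • b - (‖a‖ ^ (p - 2) : ℝ) • a
        = (‖b‖ ^ (p - 2) : ℝ) • (b - a) + ((‖b‖ ^ (p - 2) : ℝ) - ‖a‖ ^ (p - 2)) • a := by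
      rw [smul_sub, sub_smul]; abel
    have hterm1 : ‖(‖b‖ ^ (p - 2) : ℝ) • (b - a)‖ ≤ ‖b - a‖ ^ (p - 1) := by
      rw [norm_smul, Real.norm_eq_abs, abs_of_nonneg (Real.rpow_nonneg hb0.le _)]
      calc (‖b‖ : ℝ) ^ (p - 2) * ‖b - a‖ ≤ ‖b - a‖ ^ (p - 2) * ‖b - a‖ := by
            gcongr ?_ * _
            exact Real.rpow_le_rpow_of_nonpos hba hcase (by linarith)
        _ = ‖b - a‖ ^ (p - 1) := by
            rw [show p - 1 = (p - 2) + 1 by ring, Real.rpow_add_one hba.ne']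
    have hterm2 : ‖((‖b‖ ^ (p - 2) : ℝ) - ‖a‖ ^ (p - 2)) • a‖ ≤ ‖b - a‖ ^ (p - 1) := by
      rcases eq_or_ne a 0 with rfl | ha
      · simp only [norm_zero, smul_zero]
        positivity
      · have ha0 : 0 < ‖a‖ := norm_pos_iff.2 ha
        have hord : (‖b‖ : ℝ) ^ (p - 2) ≤ ‖a‖ ^ (p - 2) :=
          Real.rpow_le_rpow_of_nonpos ha0 hab (by linarith)
        rw [norm_smul, Real.norm_eq_abs, abs_of_nonpos (by linarith), neg_sub]
        calc ((‖a‖ : ℝ) ^ (p - 2) - ‖b‖ ^ (p - 2)) * ‖a‖ ≤ (‖b‖ - ‖a‖) ^ (p - 1) :=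
              scalar_key p hp1 hp2 ha0 hab
          _ ≤ ‖b - a‖ ^ (p - 1) := by
              apply Real.rpow_le_rpow (by linarith) _ (by linarith)
              have := norm_sub_norm_le b a
              linarith
    calc ‖(‖b‖ ^ (p - 2) : ℝ) • b - (‖a‖ ^ (p - 2) : ℝ) • a‖
        ≤ ‖(‖b‖ ^ (p - 2) : ℝ) • (b - a)‖ + ‖((‖b‖ ^ (p - 2) : ℝ) - ‖a‖ ^ (p - 2)) • a‖ := by
          rw [hdecomp]; exact norm_add_le _ _
      _ ≤ ‖b - a‖ ^ (p - 1) + ‖b - a‖ ^ (p - 1) := add_le_add hterm1 hterm2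
      _ = 2 * ‖b - a‖ ^ (p - 1) := by ring

private lemma const_key (p : ℝ) (hp1 : 1 < p) (hp2 : p ≤ 2) :
    (2 : ℝ) ≤ (3 - p) / (p - 1) * 2 ^ (p - 1) := by
  have hden : (0 : ℝ) < p - 1 := by linarith
  have h2q : (2 : ℝ) ^ (2 - p) ≤ 3 - p := by
    have := rpow_one_add_le_one_add_mul_self (s := 1) (by norm_num)
      (by linarith : (0:ℝ) ≤ 2 - p) (by linarith : (2:ℝ) - p ≤ 1)
    norm_num at this
    linarith
  have h2q0 : (0 : ℝ) < 2 ^ (2 - p) := Real.rpow_pos_of_pos two_pos _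
  have h2p0 : (0 : ℝ) < 2 ^ (p - 1) := Real.rpow_pos_of_pos two_pos _
  have hmul : (2 : ℝ) ^ (2 - p) * 2 ^ (p - 1) = 2 := by
    rw [← Real.rpow_add two_pos]
    norm_num
  have hkey : 2 * (p - 1) ≤ (3 - p) * 2 ^ (p - 1) := by
    have h1 : (p - 1) * 2 ^ (2 - p) ≤ 3 - p := by
      calc (p - 1) * 2 ^ (2 - p) ≤ 1 * 2 ^ (2 - p) := by
            apply mul_le_mul_of_nonneg_right (by linarith) h2q0.le
        _ = 2 ^ (2 - p) := one_mul _
        _ ≤ 3 - p := h2q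
    nlinarith [mul_le_mul_of_nonneg_right h1 h2p0.le]
  rw [div_mul_eq_mul_div, le_div_iff₀ hden]
  linarith

/-- Anisotropic Lipschitz-type inequality for `1 < p ≤ 2`:
`||b|^{p-2} M b - |a|^{p-2} M a| ≤ Λ ((3-p)/(p-1)) 2^{p-1} |b - a|^{p-1}`. -/
theorem anisotropic_lipschitz_p_le_two
    (p : ℝ) (hp1 : 1 < p) (hp2 : p ≤ 2)
    (N : ℕ) (hN : 1 ≤ N)
    (M : EuclideanSpace ℝ (Fin N) →ₗ[ℝ] EuclideanSpace ℝ (Fin N))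
    (hsymm : ∀ ξ η : EuclideanSpace ℝ (Fin N), (inner ℝ (M ξ) η : ℝ) = inner ℝ ξ (M η))
    (Λ : ℝ) (hΛ : 0 ≤ Λ)
    (hbound : ∀ ξ : EuclideanSpace ℝ (Fin N), ‖M ξ‖ ≤ Λ * ‖ξ‖)
    (a b : EuclideanSpace ℝ (Fin N)) :
    ‖‖b‖ ^ (p - 2) • M b - ‖a‖ ^ (p - 2) • M a‖
      ≤ Λ * ((3 - p) / (p - 1)) * (2 : ℝ) ^ (p - 1) * ‖b - a‖ ^ (p - 1) := by
  have hv : ‖(‖b‖ ^ (p - 2) : ℝ) • b - (‖a‖ ^ (p - 2) : ℝ) • a‖ ≤ 2 * ‖b - a‖ ^ (p - 1) := by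
    rcases le_total ‖a‖ ‖b‖ with h | h
    · exact vec_key p hp1 hp2 a b h
    · have := vec_key p hp1 hp2 b a h
      rwa [norm_sub_rev, norm_sub_rev a b] at this
  have hMeq : (‖b‖ ^ (p - 2) : ℝ) • M b - (‖a‖ ^ (p - 2) : ℝ) • M a
      = M ((‖b‖ ^ (p - 2) : ℝ) • b - (‖a‖ ^ (p - 2) : ℝ) • a) := by
    rw [map_sub, map_smul, map_smul]
  have hC : (2 : ℝ) ≤ (3 - p) / (p - 1) * 2 ^ (p - 1) := const_key p hp1 hp2
  have hpow0 : (0 : ℝ) ≤ ‖b - a‖ ^ (p - 1) := Real.rpow_nonneg (norm_nonneg _) _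
  calc ‖‖b‖ ^ (p - 2) • M b - ‖a‖ ^ (p - 2) • M a‖
      = ‖M ((‖b‖ ^ (p - 2) : ℝ) • b - (‖a‖ ^ (p - 2) : ℝ) • a)‖ := by rw [hMeq]
    _ ≤ Λ * ‖(‖b‖ ^ (p - 2) : ℝ) • b - (‖a‖ ^ (p - 2) : ℝ) • a‖ := hbound _
    _ ≤ Λ * (2 * ‖b - a‖ ^ (p - 1)) := mul_le_mul_of_nonneg_left hv hΛ
    _ ≤ Λ * ((3 - p) / (p - 1) * 2 ^ (p - 1) * ‖b - a‖ ^ (p - 1)) := by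
        apply mul_le_mul_of_nonneg_left _ hΛ
        exact mul_le_mul_of_nonneg_right hC hpow0
    _ = Λ * ((3 - p) / (p - 1)) * (2 : ℝ) ^ (p - 1) * ‖b - a‖ ^ (p - 1) := by ring
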